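/- Let n > 2k and B := A_k(n,k) as above. For every set D ⊆ [k+2,n] with 0 ≤ |D| ≤ k-2, the set {1} ∪ D belongs to D(B) \ D(S_1). Consequently |D(B) \ D(S_1)| ≥ ∑_{ℓ=0}^{k-2} C(n-k-1, ℓ). -/

import Mathlib

open Finset

def diffFam (F : Finset (Finset ℕ)) : Finset (Finset ℕ) :=
  (F ×ˢ F).image fun p => p.1 \ p.2

def fullStar1 (n k : ℕ) : Finset (Finset ℕ) :=
  ((Finset.Icc 1 n).powersetCard k).filter fun A => 1 ∈ A

def famAk (n k : ℕ) : Finset (Finset ℕ) :=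
  (((Finset.Icc 1 n).powersetCard k).filter fun A =>
      1 ∈ A ∧ (A ∩ Finset.Icc 2 (k + 1)).Nonempty) ∪ {Finset.Icc 2 (k + 1)}

theorem stmt7 (n k : ℕ) (hk : 2 ≤ k) (hn : 2 * k < n) :
    (∀ D : Finset ℕ, D ⊆ Finset.Icc (k + 2) n → D.card ≤ k - 2 →
      insert 1 D ∈ diffFam (famAk n k) \ diffFam (fullStar1 n k)) ∧
    ∑ ℓ ∈ Finset.range (k - 1), (n - k - 1).choose ℓ ≤
      (diffFam (famAk n k) \ diffFam (fullStar1 n k)).card := by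
  have hIcc : (Finset.Icc (k + 2) n).card = n - k - 1 := by
    rw [Nat.card_Icc]; omega
  have main : ∀ D : Finset ℕ, D ⊆ Finset.Icc (k + 2) n → D.card ≤ k - 2 →
      insert 1 D ∈ diffFam (famAk n k) \ diffFam (fullStar1 n k) := by
    intro D hD hDcard
    have hD1 : ∀ x ∈ D, k + 2 ≤ x ∧ x ≤ n := fun x hx => Finset.mem_Icc.mp (hD hx)
    have hcard2 : (Finset.Icc 2 (k + 1)).card = k := by rw [Nat.card_Icc]; omega
    obtain ⟨E, hE, hEcard⟩ := Finset.exists_subset_card_eq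
      (s := Finset.Icc 2 (k + 1)) (n := k - 1 - D.card) (by omega)
    have hE1 : ∀ x ∈ E, 2 ≤ x ∧ x ≤ k + 1 := fun x hx => Finset.mem_Icc.mp (hE hx)
    set A := insert 1 (D ∪ E) with hA
    have h1DE : 1 ∉ D ∪ E := by
      simp only [Finset.mem_union]
      rintro (h | h)
      · exact absurd (hD1 1 h).1 (by omega)
      · exact absurd (hE1 1 h).1 (by omega)
    have hdisj : Disjoint D E := by
      rw [Finset.disjoint_left]
      intro x hxD hxE
      have := (hD1 x hxD).1; have := (hE1 x hxE).2; omega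
    have hAcard : A.card = k := by
      rw [hA, Finset.card_insert_of_notMem h1DE, Finset.card_union_of_disjoint hdisj]
      omega
    have hAsub : A ⊆ Finset.Icc 1 n := by
      intro x hx
      rw [hA, Finset.mem_insert, Finset.mem_union] at hx
      rw [Finset.mem_Icc]
      rcases hx with h | h | h
      · omega
      · have := hD1 x h; omega
      · have := hE1 x h; omega
    have hAmem : A ∈ famAk n k := by
      apply Finset.mem_union_left
      rw [Finset.mem_filter, Finset.mem_powersetCard]
      refine ⟨⟨hAsub, hAcard⟩, Finset.mem_insert_self _ _, ?_⟩
      have hEne : E.Nonempty := by rw [← Finset.card_pos, hEcard]; omega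
      obtain ⟨x, hx⟩ := hEne
      exact ⟨x, Finset.mem_inter.mpr
        ⟨Finset.mem_insert_of_mem (Finset.mem_union_right _ hx), hE hx⟩⟩
    have hBmem : Finset.Icc 2 (k + 1) ∈ famAk n k :=
      Finset.mem_union_right _ (Finset.mem_singleton_self _)
    have hdiff : A \ Finset.Icc 2 (k + 1) = insert 1 D := by
      ext x
      simp only [Finset.mem_sdiff, hA, Finset.mem_insert, Finset.mem_union, Finset.mem_Icc]
      constructor
      · rintro ⟨h | h | h, hnot⟩
        · exact Or.inl h
        · exact Or.inr h
        · exact absurd (hE1 x h) hnot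
      · rintro (h | h)
        · exact ⟨Or.inl h, by omega⟩
        · exact ⟨Or.inr (Or.inl h), by have := hD1 x h; omega⟩
    rw [Finset.mem_sdiff]
    constructor
    · rw [diffFam, Finset.mem_image]
      exact ⟨(A, Finset.Icc 2 (k + 1)), Finset.mem_product.mpr ⟨hAmem, hBmem⟩, hdiff⟩
    · intro hmem
      rw [diffFam, Finset.mem_image] at hmem
      obtain ⟨⟨F, F'⟩, hFF, heq⟩ := hmem
      rw [Finset.mem_product] at hFF
      have h1F' : 1 ∈ F' := (Finset.mem_filter.mp hFF.2).2
      have h1 : 1 ∈ F \ F' := heq ▸ Finset.mem_insert_self 1 D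
      exact (Finset.mem_sdiff.mp h1).2 h1F'
  refine ⟨main, ?_⟩
  set s := Finset.Icc (k + 2) n with hs
  set T := (Finset.range (k - 1)).biUnion (fun ℓ => s.powersetCard ℓ) with hT
  have hTcard : T.card = ∑ ℓ ∈ Finset.range (k - 1), (n - k - 1).choose ℓ := by
    rw [hT, Finset.card_biUnion]
    · exact Finset.sum_congr rfl fun ℓ _ => by rw [Finset.card_powersetCard, hIcc]
    · intro i hi j hj hij
      rw [Function.onFun, Finset.disjoint_left]
      intro x hxi hxj
      rw [Finset.mem_powersetCard] at hxi hxj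
      exact hij (hxi.2 ▸ hxj.2)
  have hle : T.card ≤ (diffFam (famAk n k) \ diffFam (fullStar1 n k)).card := by
    apply Finset.card_le_card_of_injOn (fun D => insert 1 D)
    · intro D hDT
      rw [Finset.mem_coe, hT, Finset.mem_biUnion] at hDT
      obtain ⟨ℓ, hℓ, hD⟩ := hDT
      rw [Finset.mem_powersetCard] at hD
      rw [Finset.mem_range] at hℓ
      exact main D hD.1 (by omega)
    · intro D₁ hD₁ D₂ hD₂ heq
      have h1 : ∀ D ∈ T, (1 : ℕ) ∉ D := by
        intro D hDT hD1
        rw [hT, Finset.mem_biUnion] at hDT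
        obtain ⟨ℓ, _, hD⟩ := hDT
        rw [Finset.mem_powersetCard] at hD
        have := Finset.mem_Icc.mp (hD.1 hD1)
        omega
      have h := congrArg (fun X => Finset.erase X 1) heq
      simpa [Finset.erase_insert (h1 D₁ (Finset.mem_coe.mp hD₁)),
        Finset.erase_insert (h1 D₂ (Finset.mem_coe.mp hD₂))] using h
  omega
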